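/- arXiv:1701.04875 — 2 statements merged into one kernel-verified Lean document; each statement's English description precedes it below -/
import Mathlib

section
/- Let Ω ⊆ ℂ be a bounded domain, J ⊆ ∂Ω a nonempty compact set, and n a positive integer. Then the set Eₙ = { g ∈ R(Ω) : for every z₀ ∈ J there exists z ∈ J with 0 < |z − z₀| < 1/n and |g(z) − g(z₀)| > n·|z − z₀| } is an open subset of R(Ω) with respect to the supremum norm. -/
open scoped Classical in
/-- Extend a continuous map on `E` to all of `ℂ` by zero. -/
noncomputable def extendFn (E : Set ℂ) (f : C(E, ℂ)) : ℂ → ℂ :=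
  fun z => if h : z ∈ E then f ⟨z, h⟩ else 0

/-- Restrictions to `E` of rational functions with poles off `E`. -/
def ratRestrict (E : Set ℂ) : Set C(E, ℂ) :=
  {f | ∃ p q : Polynomial ℂ, (∀ z ∈ E, q.eval z ≠ 0) ∧
    ∀ z : E, f z = p.eval (z : ℂ) / q.eval (z : ℂ)}

lemma extendFn_eq (E : Set ℂ) (f : C(E, ℂ)) {z : ℂ} (hz : z ∈ E) :
    extendFn E f z = f ⟨z, hz⟩ := by
  simp [extendFn, hz]

/-- The key lemma: the analogous set is open in the full function space. -/
lemma En_isOpen_aux (K : Set ℂ) (hK : IsCompact K)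
    (J : Set ℂ) (hJK : J ⊆ K) (hJcpt : IsCompact J) (n : ℕ) (hn : 0 < n) :
    IsOpen {f : C(K, ℂ) | ∀ z₀ ∈ J, ∃ z ∈ J, 0 < ‖z - z₀‖ ∧
        ‖z - z₀‖ < 1 / (n : ℝ) ∧
        (n : ℝ) * ‖z - z₀‖ <
          ‖extendFn K f z - extendFn K f z₀‖} := by
  haveI : CompactSpace ↥K := isCompact_iff_compactSpace.mp hK
  rw [Metric.isOpen_iff]
  intro f hf
  -- Tietze extension of f
  obtain ⟨F, hF⟩ := f.exists_restrict_eq hK.isClosed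
  have hFeq : ∀ z (hz : z ∈ K), F z = f ⟨z, hz⟩ := by
    intro z hz
    have := congrFun (congrArg DFunLike.coe hF) ⟨z, hz⟩
    simpa using this
  -- for each z₀ ∈ J choose a witness z and a margin m, indexed by the subtype
  choose z hzJ hzpos hzlt hzbig using fun p : J => hf p.1 p.2
  set m : J → ℝ := fun p =>
    ‖extendFn K f (z p) - extendFn K f p.1‖ -
      (n : ℝ) * ‖z p - p.1‖ with hm
  set V : J → Set ℂ := fun p =>
    {w | 0 < ‖z p - w‖ ∧ ‖z p - w‖ < 1 / (n : ℝ) ∧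
      (n : ℝ) * ‖z p - w‖ + m p / 2 <
        ‖F (z p) - F w‖} with hV
  have hVopen : ∀ p : J, IsOpen (V p) := by
    intro p
    have c1 : Continuous fun w : ℂ => ‖z p - w‖ :=
      continuous_norm.comp (continuous_const.sub continuous_id)
    have c2 : Continuous fun w : ℂ => ‖F (z p) - F w‖ :=
      continuous_norm.comp (continuous_const.sub F.continuous)
    have : V p = {w | 0 < ‖z p - w‖} ∩
        ({w | ‖z p - w‖ < 1 / (n : ℝ)} ∩
         {w | (n : ℝ) * ‖z p - w‖ + m p / 2 <
            ‖F (z p) - F w‖}) := by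
      ext w; simp [hV, and_assoc]
    rw [this]
    exact (isOpen_lt continuous_const c1).inter
      ((isOpen_lt c1 continuous_const).inter
        (isOpen_lt (((continuous_const.mul c1).add continuous_const)) c2))
  have hmpos : ∀ p : J, 0 < m p := by
    intro p; simpa [hm, sub_pos] using hzbig p
  have hmem : ∀ p : J, p.1 ∈ V p := by
    intro p
    refine ⟨hzpos p, hzlt p, ?_⟩
    have e1 : F (z p) = extendFn K f (z p) := by
      rw [hFeq _ (hJK (hzJ p)), extendFn_eq K f (hJK (hzJ p))]
    have e2 : F p.1 = extendFn K f p.1 := by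
      rw [hFeq _ (hJK p.2), extendFn_eq K f (hJK p.2)]
    rw [e1, e2]
    have := hmpos p
    simp only [hm] at this ⊢
    linarith
  -- finite subcover
  obtain ⟨t, ht⟩ := hJcpt.elim_finite_subcover V hVopen
    (fun w hw => Set.mem_iUnion.2 ⟨⟨w, hw⟩, hmem ⟨w, hw⟩⟩)
  rcases t.eq_empty_or_nonempty with hte | htne
  · refine ⟨1, one_pos, fun h _ => ?_⟩
    intro z₀ hz₀
    exfalso
    have := ht hz₀
    simp [hte] at this
  · set ε : ℝ := t.inf' htne (fun p => m p / 4) with hε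
    have hεpos : 0 < ε := by
      rw [hε, Finset.lt_inf'_iff]
      exact fun p _ => div_pos (hmpos p) (by norm_num)
    refine ⟨ε, hεpos, fun h hball => ?_⟩
    intro w hw
    obtain ⟨p, hpt, hpw⟩ : ∃ p ∈ t, w ∈ V p := by
      have := ht hw
      simpa using this
    have hεle : ε ≤ m p / 4 := Finset.inf'_le _ hpt
    have hzwJ : z p ∈ J := hzJ p
    refine ⟨z p, hzwJ, hpw.1, hpw.2.1, ?_⟩
    have hd : dist h f < ε := by simpa [Metric.mem_ball] using hball
    have hd1 : dist (h ⟨z p, hJK hzwJ⟩) (f ⟨z p, hJK hzwJ⟩) ≤ dist h f :=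
      ContinuousMap.dist_apply_le_dist _
    have hd2 : dist (h ⟨w, hJK hw⟩) (f ⟨w, hJK hw⟩) ≤ dist h f :=
      ContinuousMap.dist_apply_le_dist _
    rw [Complex.dist_eq] at hd1 hd2
    have key : (n : ℝ) * ‖z p - w‖ + m p / 2 <
        ‖f ⟨z p, hJK hzwJ⟩ - f ⟨w, hJK hw⟩‖ := by
      have := hpw.2.2
      rwa [hFeq _ (hJK hzwJ), hFeq _ (hJK hw)] at this
    have tri1 : ‖f ⟨z p, hJK hzwJ⟩ - f ⟨w, hJK hw⟩‖ ≤
        ‖f ⟨z p, hJK hzwJ⟩ - h ⟨z p, hJK hzwJ⟩‖ +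
        ‖h ⟨z p, hJK hzwJ⟩ - f ⟨w, hJK hw⟩‖ :=
      norm_sub_le_norm_sub_add_norm_sub _ _ _
    have tri2 : ‖h ⟨z p, hJK hzwJ⟩ - f ⟨w, hJK hw⟩‖ ≤
        ‖h ⟨z p, hJK hzwJ⟩ - h ⟨w, hJK hw⟩‖ +
        ‖h ⟨w, hJK hw⟩ - f ⟨w, hJK hw⟩‖ :=
      norm_sub_le_norm_sub_add_norm_sub _ _ _
    have e1 : ‖f ⟨z p, hJK hzwJ⟩ - h ⟨z p, hJK hzwJ⟩‖ =
        ‖h ⟨z p, hJK hzwJ⟩ - f ⟨z p, hJK hzwJ⟩‖ := by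
      rw [← norm_neg]; ring_nf
    rw [extendFn_eq K h (hJK hzwJ), extendFn_eq K h (hJK hw)]
    linarith

/-- Let `Ω ⊆ ℂ` be a bounded domain, `J ⊆ ∂Ω` a nonempty compact set and `n ≥ 1`.  Then
`Eₙ = {g ∈ R(Ω) : ∀ z₀ ∈ J, ∃ z ∈ J, 0 < |z - z₀| < 1/n and |g z - g z₀| > n |z - z₀|}`
is open in `R(Ω)` for the supremum norm (on the compact set `cl Ω` the compact-open topology
coincides with the topology of the supremum norm). -/
theorem En_isOpen (Ω : Set ℂ) (hΩopen : IsOpen Ω) (hΩconn : IsConnected Ω)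
    (hΩbdd : Bornology.IsBounded Ω)
    (J : Set ℂ) (hJne : J.Nonempty) (hJfr : J ⊆ frontier Ω) (hJcpt : IsCompact J)
    (n : ℕ) (hn : 0 < n) :
    let R : Set C(closure Ω, ℂ) := closure (ratRestrict (closure Ω))
    let E : Set ↥R :=
      {g | ∀ z₀ ∈ J, ∃ z ∈ J, 0 < ‖z - z₀‖ ∧
        ‖z - z₀‖ < 1 / (n : ℝ) ∧
        (n : ℝ) * ‖z - z₀‖ <
          ‖extendFn (closure Ω) g.1 z - extendFn (closure Ω) g.1 z₀‖}
    IsOpen E := by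
  intro R E
  have hK : IsCompact (closure Ω) := hΩbdd.isCompact_closure
  have hJK : J ⊆ closure Ω := hJfr.trans (frontier_subset_closure)
  have := En_isOpen_aux (closure Ω) hK J hJK hJcpt n hn
  exact this.preimage continuous_subtype_val
end

section
/- Let Ω ⊆ ℂ be a bounded domain and J ⊆ ∂Ω a nonempty compact set without isolated points. If there exists at least one f ∈ R(Ω) that has infinite difference quotients at every point z₀ ∈ J along J, then the set S(Ω,J) of all such functions is dense in R(Ω): for every g ∈ R(Ω) and every ε > 0 there exists h ∈ S(Ω,J) with sup_{z ∈ cl(Ω)} |g(z) − h(z)| < ε. -/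
/-- `f` has infinite difference quotients at `z₀` along `J`. -/
def HasInfDiffQuot (f : ℂ → ℂ) (J : Set ℂ) (z₀ : ℂ) : Prop :=
  ∀ M > (0:ℝ), ∀ δ > (0:ℝ), ∃ z ∈ J,
    0 < ‖z - z₀‖ ∧ ‖z - z₀‖ < δ ∧
      M * ‖z - z₀‖ < ‖f z - f z₀‖

/-- Powers are Lipschitz on bounded balls. -/
lemma pow_lip (R : ℝ) (n : ℕ) :
    ∃ L : ℝ, 0 ≤ L ∧ ∀ z w : ℂ, ‖z‖ ≤ R → ‖w‖ ≤ R →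
      ‖z ^ n - w ^ n‖ ≤ L * ‖z - w‖ := by
  by_cases hR : 0 ≤ R
  · induction n with
    | zero => exact ⟨0, le_rfl, fun z w _ _ => by simp⟩
    | succ n ih =>
      obtain ⟨L, hL0, hL⟩ := ih
      refine ⟨R ^ n + R * L, by positivity, fun z w hz hw => ?_⟩
      have e : z ^ (n+1) - w ^ (n+1) = z ^ n * (z - w) + w * (z ^ n - w ^ n) := by ring
      rw [e]
      calc ‖z ^ n * (z - w) + w * (z ^ n - w ^ n)‖
          ≤ ‖z ^ n * (z - w)‖ + ‖w * (z ^ n - w ^ n)‖ :=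
            norm_add_le _ _
        _ = ‖z‖ ^ n * ‖z - w‖
            + ‖w‖ * ‖z ^ n - w ^ n‖ := by
            rw [norm_mul, norm_mul, norm_pow]
        _ ≤ R ^ n * ‖z - w‖ + R * (L * ‖z - w‖) := by
            have hzw : 0 ≤ ‖z - w‖ := norm_nonneg _
            have t1 : ‖z‖ ^ n * ‖z - w‖
                ≤ R ^ n * ‖z - w‖ :=
              mul_le_mul_of_nonneg_right
                (pow_le_pow_left₀ (norm_nonneg z) hz n) hzw
            have t2 : ‖w‖ * ‖z ^ n - w ^ n‖
                ≤ R * (L * ‖z - w‖) :=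
              mul_le_mul hw (hL z w hz hw) (norm_nonneg _) hR
            exact add_le_add t1 t2
        _ = (R ^ n + R * L) * ‖z - w‖ := by ring
  · exact ⟨0, le_rfl, fun z w hz _ =>
      absurd (le_trans (norm_nonneg z) hz) hR⟩

/-- Polynomials are Lipschitz on bounded balls. -/
lemma poly_lip (R : ℝ) (p : Polynomial ℂ) :
    ∃ L : ℝ, 0 ≤ L ∧ ∀ z w : ℂ, ‖z‖ ≤ R → ‖w‖ ≤ R →
      ‖p.eval z - p.eval w‖ ≤ L * ‖z - w‖ := by
  induction p using Polynomial.induction_on' with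
  | add p q hp hq =>
    obtain ⟨Lp, hLp0, hLp⟩ := hp
    obtain ⟨Lq, hLq0, hLq⟩ := hq
    refine ⟨Lp + Lq, by positivity, fun z w hz hw => ?_⟩
    have e : (p + q).eval z - (p + q).eval w
        = (p.eval z - p.eval w) + (q.eval z - q.eval w) := by
      simp [Polynomial.eval_add]; ring
    rw [e]
    calc ‖(p.eval z - p.eval w) + (q.eval z - q.eval w)‖
        ≤ ‖p.eval z - p.eval w‖ + ‖q.eval z - q.eval w‖ :=
          norm_add_le _ _
      _ ≤ Lp * ‖z - w‖ + Lq * ‖z - w‖ :=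
          add_le_add (hLp z w hz hw) (hLq z w hz hw)
      _ = (Lp + Lq) * ‖z - w‖ := by ring
  | monomial n a =>
    obtain ⟨L, hL0, hL⟩ := pow_lip R n
    refine ⟨‖a‖ * L, by positivity, fun z w hz hw => ?_⟩
    have e : (Polynomial.monomial n a).eval z - (Polynomial.monomial n a).eval w
        = a * (z ^ n - w ^ n) := by
      simp [Polynomial.eval_monomial]; ring
    rw [e, norm_mul, mul_assoc]
    exact mul_le_mul_of_nonneg_left (hL z w hz hw) (norm_nonneg a)

/-- A rational function with no poles on compact `E` is Lipschitz on `E`. -/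
lemma rat_lip (E : Set ℂ) (hEc : IsCompact E) (hEne : E.Nonempty)
    (R : ℝ) (hER : ∀ z ∈ E, ‖z‖ ≤ R)
    (r : C(E, ℂ)) (hr : r ∈ ratRestrict E) :
    ∃ L : ℝ, 0 ≤ L ∧ ∀ z w : E,
      ‖r z - r w‖ ≤ L * ‖(z : ℂ) - (w : ℂ)‖ := by
  obtain ⟨p, q, hq, hval⟩ := hr
  -- minimum of |q| on E
  obtain ⟨z₀, hz₀E, hz₀min⟩ := hEc.exists_isMinOn hEne
    ((continuous_norm.comp q.continuous).continuousOn)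
  set m : ℝ := ‖q.eval z₀‖ with hm
  have hm0 : 0 < m := by
    rw [hm]
    exact norm_pos_iff.mpr (hq z₀ hz₀E)
  have hmle : ∀ z ∈ E, m ≤ ‖q.eval z‖ := by
    intro z hz
    exact isMinOn_iff.mp hz₀min z hz
  obtain ⟨Lp, hLp0, hLp⟩ := poly_lip R p
  obtain ⟨Lq, hLq0, hLq⟩ := poly_lip R q
  have hR0 : 0 ≤ R := (norm_nonneg _).trans (hER z₀ hz₀E)
  set Bp : ℝ := ‖p.eval z₀‖ + Lp * (2 * R) with hBp
  set Bq : ℝ := ‖q.eval z₀‖ + Lq * (2 * R) with hBq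
  have hBpb : ∀ z ∈ E, ‖p.eval z‖ ≤ Bp := by
    intro z hz
    have h1 : ‖p.eval z - p.eval z₀‖ ≤ Lp * ‖z - z₀‖ :=
      hLp z z₀ (hER z hz) (hER z₀ hz₀E)
    have h2 : ‖z - z₀‖ ≤ 2 * R := by
      calc ‖z - z₀‖ ≤ ‖z‖ + ‖z₀‖ := by
            simpa [sub_eq_add_neg] using norm_add_le z (-z₀)
        _ ≤ 2 * R := by
            have := hER z hz; have := hER z₀ hz₀E; linarith
    calc ‖p.eval z‖
        ≤ ‖p.eval z - p.eval z₀‖ + ‖p.eval z₀‖ := by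
          simpa using norm_add_le (p.eval z - p.eval z₀) (p.eval z₀)
      _ ≤ Lp * (2 * R) + ‖p.eval z₀‖ := by
          have := mul_le_mul_of_nonneg_left h2 hLp0
          nlinarith
      _ = Bp := by rw [hBp]; ring
  have hBqb : ∀ z ∈ E, ‖q.eval z‖ ≤ Bq := by
    intro z hz
    have h1 : ‖q.eval z - q.eval z₀‖ ≤ Lq * ‖z - z₀‖ :=
      hLq z z₀ (hER z hz) (hER z₀ hz₀E)
    have h2 : ‖z - z₀‖ ≤ 2 * R := by
      calc ‖z - z₀‖ ≤ ‖z‖ + ‖z₀‖ := by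
            simpa [sub_eq_add_neg] using norm_add_le z (-z₀)
        _ ≤ 2 * R := by
            have := hER z hz; have := hER z₀ hz₀E; linarith
    calc ‖q.eval z‖
        ≤ ‖q.eval z - q.eval z₀‖ + ‖q.eval z₀‖ := by
          simpa using norm_add_le (q.eval z - q.eval z₀) (q.eval z₀)
      _ ≤ Lq * (2 * R) + ‖q.eval z₀‖ := by
          have := mul_le_mul_of_nonneg_left h2 hLq0
          nlinarith
      _ = Bq := by rw [hBq]; ring
  have hBp0 : 0 ≤ Bp := (norm_nonneg _).trans (hBpb z₀ hz₀E)
  have hBq0 : 0 ≤ Bq := (norm_nonneg _).trans (hBqb z₀ hz₀E)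
  refine ⟨(Lp * Bq + Bp * Lq) / (m * m), by positivity, fun z w => ?_⟩
  have hqz : q.eval (z : ℂ) ≠ 0 := hq z z.2
  have hqw : q.eval (w : ℂ) ≠ 0 := hq w w.2
  rw [hval z, hval w]
  rw [div_sub_div _ _ hqz hqw, norm_div, norm_mul]
  have hnum : ‖p.eval (z:ℂ) * q.eval (w:ℂ) - q.eval (z:ℂ) * p.eval (w:ℂ)‖
      ≤ (Lp * Bq + Bp * Lq) * ‖(z:ℂ) - (w:ℂ)‖ := by
    have e : p.eval (z:ℂ) * q.eval (w:ℂ) - q.eval (z:ℂ) * p.eval (w:ℂ)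
        = (p.eval (z:ℂ) - p.eval (w:ℂ)) * q.eval (w:ℂ)
          + p.eval (w:ℂ) * (q.eval (w:ℂ) - q.eval (z:ℂ)) := by ring
    rw [e]
    calc ‖_‖
        ≤ ‖(p.eval (z:ℂ) - p.eval (w:ℂ)) * q.eval (w:ℂ)‖
          + ‖p.eval (w:ℂ) * (q.eval (w:ℂ) - q.eval (z:ℂ))‖ :=
          norm_add_le _ _
      _ = ‖p.eval (z:ℂ) - p.eval (w:ℂ)‖ * ‖q.eval (w:ℂ)‖
          + ‖p.eval (w:ℂ)‖ * ‖q.eval (w:ℂ) - q.eval (z:ℂ)‖ := by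
          rw [norm_mul, norm_mul]
      _ ≤ (Lp * ‖(z:ℂ) - (w:ℂ)‖) * Bq
          + Bp * (Lq * ‖(w:ℂ) - (z:ℂ)‖) := by
          have t1 : ‖p.eval (z:ℂ) - p.eval (w:ℂ)‖ * ‖q.eval (w:ℂ)‖
              ≤ (Lp * ‖(z:ℂ) - (w:ℂ)‖) * Bq :=
            mul_le_mul (hLp (z:ℂ) (w:ℂ) (hER _ z.2) (hER _ w.2)) (hBqb _ w.2)
              (norm_nonneg _) (by positivity)
          have t2 : ‖p.eval (w:ℂ)‖ * ‖q.eval (w:ℂ) - q.eval (z:ℂ)‖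
              ≤ Bp * (Lq * ‖(w:ℂ) - (z:ℂ)‖) :=
            mul_le_mul (hBpb _ w.2) (hLq (w:ℂ) (z:ℂ) (hER _ w.2) (hER _ z.2))
              (norm_nonneg _) hBp0
          exact add_le_add t1 t2
      _ = (Lp * Bq + Bp * Lq) * ‖(z:ℂ) - (w:ℂ)‖ := by
          rw [show ((w:ℂ) - (z:ℂ)) = -((z:ℂ) - (w:ℂ)) by ring, norm_neg]
          ring
  have hden : m * m ≤ ‖q.eval (z:ℂ)‖ * ‖q.eval (w:ℂ)‖ :=
    mul_le_mul (hmle _ z.2) (hmle _ w.2) hm0.le (norm_nonneg _)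
  calc ‖p.eval (z:ℂ) * q.eval (w:ℂ) - q.eval (z:ℂ) * p.eval (w:ℂ)‖
        / (‖q.eval (z:ℂ)‖ * ‖q.eval (w:ℂ)‖)
      ≤ ((Lp * Bq + Bp * Lq) * ‖(z:ℂ) - (w:ℂ)‖) / (m * m) :=
        div_le_div₀ (by positivity) hnum (by positivity) hden
    _ = (Lp * Bq + Bp * Lq) / (m * m) * ‖(z:ℂ) - (w:ℂ)‖ := by ring

/-- `ratRestrict` is stable under `x ↦ r + c • x`. -/
lemma ratRestrict_add_smul (E : Set ℂ) (r : C(E, ℂ)) (hr : r ∈ ratRestrict E) (c : ℂ) :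
    Set.MapsTo (fun x : C(E, ℂ) => r + c • x) (ratRestrict E) (ratRestrict E) := by
  obtain ⟨p1, q1, hq1, hr1⟩ := hr
  rintro x ⟨p2, q2, hq2, hx2⟩
  refine ⟨p1 * q2 + Polynomial.C c * p2 * q1, q1 * q2,
    fun z hz => by
      simp only [Polynomial.eval_mul]
      exact mul_ne_zero (hq1 z hz) (hq2 z hz),
    fun z => ?_⟩
  have h1 := hq1 (z : ℂ) z.2
  have h2 := hq2 (z : ℂ) z.2
  simp only [ContinuousMap.add_apply, ContinuousMap.smul_apply, smul_eq_mul,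
    hr1 z, hx2 z, Polynomial.eval_add, Polynomial.eval_mul, Polynomial.eval_C]
  field_simp
  try ring

/-- Let `Ω ⊆ ℂ` be a bounded domain and `J ⊆ ∂Ω` a nonempty compact set without isolated
points.  If some `f ∈ R(Ω)` has infinite difference quotients at every point of `J` along `J`,
then the set `S(Ω, J)` of all such functions is dense in `R(Ω)`: for every `g ∈ R(Ω)` and
`ε > 0` there is `h ∈ S(Ω, J)` with `sup_{z ∈ cl Ω} |g z - h z| < ε`. -/
theorem S_dense (Ω : Set ℂ) (hΩopen : IsOpen Ω) (hΩconn : IsConnected Ω)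
    (hΩbdd : Bornology.IsBounded Ω)
    (J : Set ℂ) (hJne : J.Nonempty) (hJfr : J ⊆ frontier Ω) (hJcpt : IsCompact J)
    (hJperf : ∀ z ∈ J, z ∈ closure (J \ {z}))
    (hex : ∃ f ∈ closure (ratRestrict (closure Ω)),
      ∀ z₀ ∈ J, HasInfDiffQuot (extendFn (closure Ω) f) J z₀) :
    ∀ g ∈ closure (ratRestrict (closure Ω)), ∀ ε > (0:ℝ),
      ∃ h ∈ closure (ratRestrict (closure Ω)),
        (∀ z₀ ∈ J, HasInfDiffQuot (extendFn (closure Ω) h) J z₀) ∧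
        (⨆ z : closure Ω, ‖g z - h z‖) < ε := by
  intro g hg ε hε
  have hEc : IsCompact (closure Ω) :=
    Metric.isCompact_of_isClosed_isBounded isClosed_closure hΩbdd.closure
  haveI : CompactSpace (closure Ω) := isCompact_iff_compactSpace.mp hEc
  have hEne : (closure Ω).Nonempty := hΩconn.nonempty.closure
  haveI : Nonempty (closure Ω) := hEne.to_subtype
  obtain ⟨R0, hR0⟩ := hΩbdd.closure.subset_closedBall 0
  set R : ℝ := max R0 0 with hRdef
  have hER : ∀ z ∈ closure Ω, ‖z‖ ≤ R := by
    intro z hz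
    have := hR0 hz
    rw [Metric.mem_closedBall, Complex.dist_eq, sub_zero] at this
    exact this.trans (le_max_left _ _)
  obtain ⟨f, hf, hfq⟩ := hex
  obtain ⟨r, hrmem, hgr⟩ := Metric.mem_closure_iff.mp hg (ε / 2) (by positivity)
  obtain ⟨L, hL0, hLip⟩ := rat_lip (closure Ω) hEc hEne R hER r hrmem
  set c : ℝ := ε / (2 * (‖f‖ + 1)) with hcdef
  have hc : 0 < c := by
    have : (0:ℝ) ≤ ‖f‖ := norm_nonneg f
    positivity
  set h : C((closure Ω : Set ℂ), ℂ) := r + (c : ℂ) • f with hhdef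
  have hJE : J ⊆ closure Ω := fun z hz => frontier_subset_closure (hJfr hz)
  refine ⟨h, ?_, ?_, ?_⟩
  · -- membership in the closure
    have hcont : Continuous (fun x : C((closure Ω : Set ℂ), ℂ) => r + (c : ℂ) • x) :=
      continuous_const.add (continuous_const_smul _)
    exact map_mem_closure hcont hf (ratRestrict_add_smul _ r hrmem _)
  · -- infinite difference quotients
    intro z₀ hz₀ M hM δ hδ
    have hz₀E : z₀ ∈ closure Ω := hJE hz₀
    obtain ⟨z, hzJ, h1, h2, h3⟩ := hfq z₀ hz₀ ((M + L + 1) / c) (by positivity) δ hδ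
    refine ⟨z, hzJ, h1, h2, ?_⟩
    have hzE : z ∈ closure Ω := hJE hzJ
    have hef : ∀ (u : ℂ) (hu : u ∈ closure Ω) (x : C((closure Ω : Set ℂ), ℂ)),
        extendFn (closure Ω) x u = x ⟨u, hu⟩ := by
      intro u hu x
      simp [extendFn, dif_pos hu]
    rw [hef z hzE f, hef z₀ hz₀E f] at h3
    rw [hef z hzE h, hef z₀ hz₀E h]
    set d : ℝ := ‖z - z₀‖ with hddef
    set Δf : ℂ := f ⟨z, hzE⟩ - f ⟨z₀, hz₀E⟩ with hΔf
    set Δr : ℂ := r ⟨z, hzE⟩ - r ⟨z₀, hz₀E⟩ with hΔr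
    have e1 : h ⟨z, hzE⟩ - h ⟨z₀, hz₀E⟩ = Δr + (c : ℂ) * Δf := by
      simp only [hhdef, ContinuousMap.add_apply, ContinuousMap.smul_apply, smul_eq_mul,
        hΔf, hΔr]
      ring
    have habsr : ‖Δr‖ ≤ L * d := by
      have := hLip ⟨z, hzE⟩ ⟨z₀, hz₀E⟩
      simpa [hΔr, hddef] using this
    have hcf : (M + L + 1) * d < c * ‖Δf‖ := by
      have := mul_lt_mul_of_pos_left h3 hc
      calc (M + L + 1) * d = c * ((M + L + 1) / c * d) := by
            field_simp
        _ < c * ‖Δf‖ := this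
    have hkey : c * ‖Δf‖ - ‖Δr‖
        ≤ ‖Δr + (c : ℂ) * Δf‖ := by
      have habs : ‖(c : ℂ) * Δf‖ = c * ‖Δf‖ := by
        rw [norm_mul, Complex.norm_real, Real.norm_eq_abs, abs_of_pos hc]
      have : ‖(c : ℂ) * Δf‖
          ≤ ‖Δr + (c : ℂ) * Δf‖ + ‖Δr‖ := by
        calc ‖(c : ℂ) * Δf‖
            = ‖(Δr + (c : ℂ) * Δf) + (-Δr)‖ := by congr 1; ring
          _ ≤ ‖Δr + (c : ℂ) * Δf‖ + ‖-Δr‖ :=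
            norm_add_le _ _
          _ = ‖Δr + (c : ℂ) * Δf‖ + ‖Δr‖ := by
            rw [norm_neg]
      linarith [habs ▸ this]
    rw [e1]
    have : M * d < c * ‖Δf‖ - ‖Δr‖ := by nlinarith
    linarith [hkey]
  · -- the sup estimate
    have hb : ∀ z : (closure Ω : Set ℂ), ‖g z - h z‖ ≤ dist g h := by
      intro z
      have := ContinuousMap.dist_apply_le_dist (f := g) (g := h) z
      rwa [Complex.dist_eq] at this
    have hdist : dist g h < ε := by
      have h1 : dist g h ≤ dist g r + dist r h := dist_triangle _ _ _
      have h2 : dist r h = c * ‖f‖ := by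
        rw [hhdef, dist_self_add_right, norm_smul, Complex.norm_real,
          Real.norm_eq_abs, abs_of_pos hc]
      have h3 : c * ‖f‖ < ε / 2 := by
        rw [hcdef]
        have h0 : (0:ℝ) ≤ ‖f‖ := norm_nonneg f
        rw [div_mul_eq_mul_div, div_lt_iff₀ (by positivity)]
        nlinarith
      linarith
    exact lt_of_le_of_lt (ciSup_le hb) hdist
end
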